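/- The ideal (Q1,U2)^{m12} ∩ (Q2,U1)^{m21} equals the ideal generated by the set of all products Q1^{a} Q2^{b} U1^{c} U2^{d} with a, b, c, d nonnegative integers satisfying a + d = m12 and b + c = m21. (This is the generator description, in degrees coming from the set D_0 of Lemma 3.3, of the defining ideal of a set of fat points whose support is the disjoint union of two fat complete intersections.) -/

import Mathlib

open MvPolynomial

namespace TwoCIAux

section Generic
variable {R : Type*} [CommRing R]

theorem isRelPrime_of_prime_not_dvd [IsDomain R] {p y : R} (hp : Prime p) (h : ¬ p ∣ y) :
    IsRelPrime p y := by
  intro e hep hey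
  obtain ⟨c, hc⟩ := hep
  rcases hp.irreducible.isUnit_or_isUnit hc with h1 | h1
  · exact h1
  · have hpe : p ∣ e := by
      refine ⟨(h1.unit⁻¹ : Rˣ), ?_⟩
      rw [hc, mul_assoc, h1.mul_val_inv, mul_one]
    exact absurd (hpe.trans hey) h

theorem span_pair_pow (q u : R) (M : ℕ) :
    Ideal.span {q, u} ^ M
      = Ideal.span (Set.range fun i : Fin (M+1) => q ^ (i : ℕ) * u ^ (M - (i : ℕ))) := by
  induction M with
  | zero =>
    rw [pow_zero, Ideal.one_eq_top, eq_comm, Ideal.eq_top_iff_one]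
    exact Ideal.subset_span ⟨0, by simp⟩
  | succ M ih =>
    rw [pow_succ, ih, Ideal.span_mul_span']
    apply le_antisymm
    · rw [Ideal.span_le]
      rintro x ⟨y, ⟨i, rfl⟩, z, hz, rfl⟩
      rcases hz with rfl | rfl
      · apply Ideal.subset_span
        refine ⟨i.succ, ?_⟩
        have hi : (i : ℕ) ≤ M := Nat.lt_succ_iff.mp i.isLt
        simp only [Fin.val_succ, Nat.succ_sub_succ]
        ring
      · apply Ideal.subset_span
        refine ⟨i.castSucc, ?_⟩
        have hi : (i : ℕ) ≤ M := Nat.lt_succ_iff.mp i.isLt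
        simp only [Fin.coe_castSucc]
        rw [Nat.succ_sub hi, pow_succ]
        ring
    · rw [Ideal.span_le]
      rintro x ⟨j, rfl⟩
      induction j using Fin.cases with
      | zero =>
        apply Ideal.subset_span
        have h0 : q ^ ((0 : Fin (M+2)) : ℕ) * u ^ (M + 1 - ((0 : Fin (M+2)) : ℕ))
            = (q ^ (0:ℕ) * u ^ (M - 0)) * u := by
          simp [pow_succ]
        dsimp only
        rw [h0]
        exact Set.mul_mem_mul ⟨0, rfl⟩ (by simp)
      | succ i =>
        apply Ideal.subset_span
        have hi : (i : ℕ) ≤ M := Nat.lt_succ_iff.mp i.isLt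
        have h0 : q ^ ((i.succ : Fin (M+2)) : ℕ) * u ^ (M + 1 - ((i.succ : Fin (M+2)) : ℕ))
            = (q ^ (i:ℕ) * u ^ (M - i)) * q := by
          rw [Fin.val_succ, Nat.succ_sub_succ]
          ring
        dsimp only
        rw [h0]
        exact Set.mul_mem_mul ⟨i, rfl⟩ (by simp)

theorem mem_mul_span_pair_pow {K : Ideal R} {q u f : R} {M : ℕ}
    (h : f ∈ K * Ideal.span {q, u} ^ M) :
    ∃ g : ℕ → R, (∀ i, g i ∈ K) ∧
      f = ∑ i ∈ Finset.range (M+1), q ^ i * u ^ (M - i) * g i := by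
  rw [span_pair_pow] at h
  refine Submodule.mul_induction_on h ?_ ?_
  · intro r hr s hs
    obtain ⟨c, hc⟩ := Submodule.mem_span_range_iff_exists_fun R |>.mp hs
    refine ⟨fun n => if hn : n < M + 1 then c ⟨n, hn⟩ * r else 0, ?_, ?_⟩
    · intro n
      dsimp only
      split
      · exact Ideal.mul_mem_left K _ hr
      · exact K.zero_mem
    · have h1 : ∀ i : Fin (M+1), (fun n : ℕ => q ^ n * u ^ (M - n) *
          (if hn : n < M + 1 then c ⟨n, hn⟩ * r else 0)) (i : ℕ)
          = c i • (q ^ (i:ℕ) * u ^ (M - (i:ℕ))) * r := by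
        intro i
        dsimp only
        rw [dif_pos i.isLt, smul_eq_mul, Fin.eta]
        ring
      rw [← Fin.sum_univ_eq_sum_range (fun n : ℕ => q ^ n * u ^ (M - n) *
          (if hn : n < M + 1 then c ⟨n, hn⟩ * r else 0)) (M+1)]
      rw [Finset.sum_congr rfl (fun i _ => h1 i), ← Finset.sum_mul, hc]
      ring
  · rintro x y ⟨gx, hgx, rfl⟩ ⟨gy, hgy, rfl⟩
    refine ⟨fun i => gx i + gy i, fun i => Ideal.add_mem K (hgx i) (hgy i), ?_⟩
    rw [← Finset.sum_add_distrib]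
    apply Finset.sum_congr rfl
    intros; ring

theorem mem_span_pair_pow {q u f : R} {M : ℕ}
    (h : f ∈ Ideal.span {q, u} ^ M) :
    ∃ g : ℕ → R, f = ∑ i ∈ Finset.range (M+1), q ^ i * u ^ (M - i) * g i := by
  have h' : f ∈ (⊤ : Ideal R) * Ideal.span {q, u} ^ M := by rwa [Ideal.top_mul]
  obtain ⟨g, -, hg⟩ := mem_mul_span_pair_pow h'
  exact ⟨g, hg⟩

theorem pow_mul_pow_mem (q u : R) {a b M : ℕ} (h : a + b = M) :
    q ^ a * u ^ b ∈ Ideal.span {q, u} ^ M := by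
  subst h
  rw [pow_add]
  exact Ideal.mul_mem_mul
    (Ideal.pow_mem_pow (Ideal.subset_span (by simp)) a)
    (Ideal.pow_mem_pow (Ideal.subset_span (by simp)) b)

theorem quasi_reg [IsDomain R] [DecompositionMonoid R] {q u : R} (hq : q ≠ 0)
    (hrel : IsRelPrime q u) :
    ∀ (N : ℕ) (g h : ℕ → R),
      ((∑ i ∈ Finset.range (N+1), q ^ i * u ^ (N - i) * g i)
        = ∑ j ∈ Finset.range (N+2), q ^ j * u ^ (N + 1 - j) * h j) →
      ∀ i ≤ N, g i ∈ Ideal.span {q, u} := by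
  intro N
  induction N with
  | zero =>
    intro g h heq i hi
    interval_cases i
    simp only [Finset.sum_range_succ, Finset.sum_range_zero, pow_zero, pow_one, one_mul,
      mul_one, zero_add, Nat.sub_self, Nat.sub_zero] at heq
    rw [Ideal.mem_span_pair]
    exact ⟨h 1, h 0, by linear_combination -heq⟩
  | succ N ih =>
    intro g h heq i hi
    rw [Finset.sum_range_succ' (fun i => q ^ i * u ^ (N + 1 - i) * g i) (N+1),
        Finset.sum_range_succ' (fun j => q ^ j * u ^ (N + 2 - j) * h j) (N+2)] at heq
    simp only [pow_zero, one_mul, Nat.succ_sub_succ, Nat.sub_zero] at heq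
    -- heq : (∑ i ∈ range (N+1), q^(i+1) * u^(N-i) * g (i+1)) + u^(N+1) * g 0
    --      = (∑ j ∈ range (N+2), q^(j+1) * u^(N+1-j) * h (j+1)) + u^(N+2) * h 0
    have e1 : (∑ i ∈ Finset.range (N+1), q ^ (i+1) * u ^ (N - i) * g (i+1))
        = q * ∑ i ∈ Finset.range (N+1), q ^ i * u ^ (N - i) * g (i+1) := by
      rw [Finset.mul_sum]
      exact Finset.sum_congr rfl fun i _ => by ring
    have e2 : (∑ j ∈ Finset.range (N+2), q ^ (j+1) * u ^ (N + 1 - j) * h (j+1))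
        = q * ∑ j ∈ Finset.range (N+2), q ^ j * u ^ (N + 1 - j) * h (j+1) := by
      rw [Finset.mul_sum]
      exact Finset.sum_congr rfl fun j _ => by ring
    have hdvd : q ∣ u ^ (N+1) * (g 0 - u * h 0) := by
      refine ⟨(∑ j ∈ Finset.range (N+2), q ^ j * u ^ (N + 1 - j) * h (j+1))
        - ∑ i ∈ Finset.range (N+1), q ^ i * u ^ (N - i) * g (i+1), ?_⟩
      linear_combination heq - e1 + e2
    obtain ⟨w, hw⟩ := (hrel.pow_right (n := N+1)).dvd_of_dvd_mul_left hdvd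
    rcases Nat.eq_zero_or_pos i with rfl | hipos
    · rw [Ideal.mem_span_pair]
      exact ⟨w, h 0, by linear_combination -hw⟩
    · obtain ⟨i', rfl⟩ := Nat.exists_eq_succ_of_ne_zero (Nat.pos_iff_ne_zero.mp hipos)
      set h' : ℕ → R := fun n => if n = 0 then h 1 - w else h (n+1) with hh'
      have hB : (∑ j ∈ Finset.range (N+2), q ^ j * u ^ (N + 1 - j) * h' j)
          = (∑ j ∈ Finset.range (N+2), q ^ j * u ^ (N + 1 - j) * h (j+1)) - u ^ (N+1) * w := by
        rw [Finset.sum_range_succ' (fun j => q ^ j * u ^ (N + 1 - j) * h' j) (N+1),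
            Finset.sum_range_succ' (fun j => q ^ j * u ^ (N + 1 - j) * h (j+1)) (N+1)]
        have ht : ∀ j ∈ Finset.range (N+1),
            (fun j => q ^ j * u ^ (N + 1 - j) * h' j) (j+1)
              = q ^ (j+1) * u ^ (N + 1 - (j+1)) * h (j+2) := by
          intro j _
          simp [hh']
        rw [Finset.sum_congr rfl ht]
        simp only [hh', if_pos rfl, pow_zero, one_mul, Nat.sub_zero]
        ring
      have key : (∑ i ∈ Finset.range (N+1), q ^ i * u ^ (N - i) * (fun n => g (n+1)) i)
          = ∑ j ∈ Finset.range (N+2), q ^ j * u ^ (N + 1 - j) * h' j := by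
        apply mul_left_cancel₀ hq
        have e1' : (∑ i ∈ Finset.range (N+1), q ^ (i+1) * u ^ (N - i) * g (i+1))
            = q * ∑ i ∈ Finset.range (N+1), q ^ i * u ^ (N - i) * (fun n => g (n+1)) i := e1
        linear_combination heq - e1' + e2 - q * hB - (u:R) ^ (N+1) * hw
      have := ih (fun n => g (n+1)) h' key i' (by omega)
      simpa using this

end Generic

section Poly

variable {k : Type*} [Field k]

local notation "MvP" => MvPolynomial (Fin 4) k

theorem divX_X_mul {S : Type*} [Semiring S] (p : Polynomial S) :
    (Polynomial.X * p).divX = p := by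
  ext n
  rw [Polynomial.coeff_divX, Polynomial.coeff_X_mul]

theorem mem_span_triple {x a b c : MvP} :
    x ∈ Ideal.span {a, b, c} ↔ ∃ p q r, x = p * a + q * b + r * c := by
  constructor
  · intro hx
    rw [show ({a, b, c} : Set MvP) = insert a {b, c} from rfl] at hx
    obtain ⟨p, z, hz, rfl⟩ := Submodule.mem_span_insert.mp hx
    obtain ⟨q, r, hqr⟩ := Submodule.mem_span_pair.mp hz
    exact ⟨p, q, r, by rw [← hqr]; simp only [smul_eq_mul]; ring⟩
  · rintro ⟨p, q, r, rfl⟩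
    have ha : a ∈ Ideal.span {a, b, c} := Ideal.subset_span (by simp)
    have hb : b ∈ Ideal.span {a, b, c} := Ideal.subset_span (by simp)
    have hc : c ∈ Ideal.span {a, b, c} := Ideal.subset_span (by simp)
    exact Ideal.add_mem _ (Ideal.add_mem _ (Ideal.mul_mem_left _ _ ha)
      (Ideal.mul_mem_left _ _ hb)) (Ideal.mul_mem_left _ _ hc)

/-- The expansion of `MvP` as polynomials in the linear form `c • X a + d • X b`. -/
noncomputable def phi (a b : Fin 4) (c d : k) : MvP →ₐ[k] Polynomial MvP :=
  aeval (fun j => if j = b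
    then Polynomial.C (MvPolynomial.C d⁻¹) * (Polynomial.X - Polynomial.C (c • X a))
    else Polynomial.C (X j))

theorem phi_X_of_ne (a b : Fin 4) (c d : k) {j : Fin 4} (hj : j ≠ b) :
    phi a b c d (X j) = Polynomial.C (X j) := by
  simp [phi, hj]

theorem phi_X_self (a b : Fin 4) (c d : k) :
    phi a b c d (X b) =
      Polynomial.C (MvPolynomial.C d⁻¹) * (Polynomial.X - Polynomial.C (c • X a)) := by
  simp [phi]

theorem phi_C (a b : Fin 4) (c d : k) (r : k) :
    phi a b c d (MvPolynomial.C r) = Polynomial.C (MvPolynomial.C r) := by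
  have : (MvPolynomial.C r : MvP) = algebraMap k MvP r := rfl
  rw [this, AlgHom.commutes, Polynomial.algebraMap_apply]

theorem phi_form (a b : Fin 4) (hab : a ≠ b) (c d : k) (hd : d ≠ 0) :
    phi a b c d (c • X a + d • X b) = Polynomial.X := by
  rw [map_add, map_smul, map_smul, phi_X_of_ne a b c d hab, phi_X_self]
  rw [Algebra.smul_def d, Polynomial.algebraMap_apply, ← mul_assoc]
  have : algebraMap k MvP d = MvPolynomial.C d := rfl
  rw [this, ← Polynomial.C_mul, ← MvPolynomial.C_mul, mul_inv_cancel₀ hd,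
    MvPolynomial.C_1, Polynomial.C_1, one_mul, Polynomial.smul_C]
  ring

theorem eval_phi (a b : Fin 4) (hab : a ≠ b) (c d : k) (hd : d ≠ 0) (f : MvP) :
    Polynomial.aeval (c • X a + d • X b) (phi a b c d f) = f := by
  have hcomp : (((Polynomial.aeval (c • X a + d • X b) :
        Polynomial MvP →ₐ[MvP] MvP).restrictScalars k).comp (phi a b c d))
      = AlgHom.id k MvP := by
    apply MvPolynomial.algHom_ext
    intro j
    by_cases hj : j = b
    · subst hj
      simp only [AlgHom.comp_apply, AlgHom.coe_restrictScalars', AlgHom.id_apply]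
      rw [phi_X_self, map_mul, map_sub, Polynomial.aeval_X, Polynomial.aeval_C,
        Polynomial.aeval_C]
      simp only [Algebra.algebraMap_self, RingHom.id_apply]
      rw [add_sub_cancel_left, smul_eq_C_mul, ← mul_assoc, ← MvPolynomial.C_mul,
        inv_mul_cancel₀ hd, MvPolynomial.C_1, one_mul]
    · simp only [AlgHom.comp_apply, AlgHom.coe_restrictScalars', AlgHom.id_apply]
      rw [phi_X_of_ne a b c d hj, Polynomial.aeval_C]
      simp
  have := DFunLike.congr_fun hcomp f
  simpa using this

/-- The retraction killing the linear form `c • X a + d • X b`. -/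
noncomputable def eps (a b : Fin 4) (c d : k) : MvP →+* MvP :=
  (Polynomial.constantCoeff).comp (phi a b c d).toRingHom

theorem eps_apply (a b : Fin 4) (c d : k) (f : MvP) :
    eps a b c d f = (phi a b c d f).coeff 0 := rfl

theorem phi_decomp (a b : Fin 4) (hab : a ≠ b) (c d : k) (hd : d ≠ 0) (f : MvP) :
    f = (c • X a + d • X b) *
        Polynomial.aeval (c • X a + d • X b) ((phi a b c d f).divX)
      + eps a b c d f := by
  have h0 := Polynomial.X_mul_divX_add (phi a b c d f)
  have h1 := congrArg (fun p : Polynomial MvP =>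
    (Polynomial.aeval (c • X a + d • X b) : Polynomial MvP →ₐ[MvP] MvP) p) h0
  simp only [map_add, map_mul, Polynomial.aeval_X, Polynomial.aeval_C,
    Algebra.algebraMap_self, RingHom.id_apply, eval_phi a b hab c d hd] at h1
  rw [eps_apply]
  linear_combination -h1

theorem sub_eps_mem (a b : Fin 4) (hab : a ≠ b) (c d : k) (hd : d ≠ 0) (f : MvP) :
    f - eps a b c d f ∈ Ideal.span {c • X a + d • X b} := by
  rw [Ideal.mem_span_singleton]
  exact ⟨Polynomial.aeval (c • X a + d • X b) ((phi a b c d f).divX),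
    by linear_combination phi_decomp a b hab c d hd f⟩

theorem eps_C (a b : Fin 4) (c d : k) (r : k) :
    eps a b c d (MvPolynomial.C r) = MvPolynomial.C r := by
  rw [eps_apply, phi_C]
  simp

theorem eps_smul (a b : Fin 4) (c d : k) (r : k) (f : MvP) :
    eps a b c d (r • f) = r • eps a b c d f := by
  rw [smul_eq_C_mul, map_mul, eps_C, ← smul_eq_C_mul]

theorem eps_X_of_ne (a b : Fin 4) (c d : k) {j : Fin 4} (hj : j ≠ b) :
    eps a b c d (X j) = X j := by
  rw [eps_apply, phi_X_of_ne a b c d hj]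
  simp

theorem eps_X_self (a b : Fin 4) (c d : k) :
    eps a b c d (X b) = -(d⁻¹ * c) • X a := by
  rw [eps_apply, phi_X_self]
  rw [Polynomial.coeff_C_mul]
  simp [smul_eq_C_mul, MvPolynomial.C_mul]
  ring

theorem eps_form (a b : Fin 4) (hab : a ≠ b) (c d : k) (c' d' : k) :
    eps a b c d (c' • X a + d' • X b) = (c' - d' * (d⁻¹ * c)) • X a := by
  rw [map_add, eps_smul, eps_smul, eps_X_of_ne a b c d hab, eps_X_self, smul_smul,
    ← add_smul]
  congr 1
  ring

theorem eps_form_other (a b : Fin 4) (c d : k) (a' b' : Fin 4) (ha' : a' ≠ b) (hb' : b' ≠ b)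
    (c' d' : k) :
    eps a b c d (c' • X a' + d' • X b') = c' • X a' + d' • X b' := by
  rw [map_add, eps_smul, eps_smul, eps_X_of_ne a b c d ha', eps_X_of_ne a b c d hb']

theorem eps_self_form (a b : Fin 4) (hab : a ≠ b) (c d : k) (hd : d ≠ 0) :
    eps a b c d (c • X a + d • X b) = 0 := by
  rw [eps_form a b hab]
  rw [show c - d * (d⁻¹ * c) = 0 by rw [← mul_assoc, mul_inv_cancel₀ hd, one_mul, sub_self]]
  rw [zero_smul]

theorem form_ne_zero (a b : Fin 4) (hab : a ≠ b) {c d : k} (hd : d ≠ 0) :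
    (c • X a + d • X b : MvP) ≠ 0 := by
  intro h0
  have h1 := congrArg (MvPolynomial.coeff (Finsupp.single b 1)) h0
  have hne : Finsupp.single a 1 ≠ Finsupp.single b (1:ℕ) := by
    simp [Finsupp.single_eq_single_iff, hab]
  simp [MvPolynomial.coeff_smul, MvPolynomial.coeff_X', hne] at h1
  exact hd h1

theorem ker_eps (a b : Fin 4) (hab : a ≠ b) (c d : k) (hd : d ≠ 0) :
    RingHom.ker (eps a b c d) = Ideal.span {c • X a + d • X b} := by
  ext f
  rw [RingHom.mem_ker]
  constructor
  · intro h0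
    have := sub_eps_mem a b hab c d hd f
    rwa [h0, sub_zero] at this
  · intro hf
    obtain ⟨g, rfl⟩ := Ideal.mem_span_singleton.mp hf
    rw [map_mul, eps_self_form a b hab c d hd, zero_mul]

theorem prime_form (a b : Fin 4) (hab : a ≠ b) {c d : k} (hd : d ≠ 0) :
    Prime (c • X a + d • X b : MvP) := by
  have hne := form_ne_zero a b hab (c := c) hd
  rw [← Ideal.span_singleton_prime hne]
  rw [← ker_eps a b hab c d hd]
  have hdom : IsDomain (MvP ⧸ RingHom.ker (eps a b c d)) :=
    Function.Injective.isDomain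
      (RingHom.quotientKerEquivRange (eps a b c d)).toRingHom
      (RingHom.quotientKerEquivRange (eps a b c d)).injective
  exact (Ideal.Quotient.isDomain_iff_prime _).mp hdom

theorem not_dvd_of_eps (a b : Fin 4) (hab : a ≠ b) (c d : k) (hd : d ≠ 0) {x : MvP}
    (hx : eps a b c d x = x) (hxne : x ≠ 0) : ¬ (c • X a + d • X b) ∣ x := by
  intro hdd
  obtain ⟨s, rfl⟩ := hdd
  rw [map_mul, eps_self_form a b hab c d hd, zero_mul] at hx
  exact hxne hx.symm

theorem phi_adjoin (a b : Fin 4) (c d : k) (i1 i2 : Fin 4) (h1 : i1 ≠ b) (h2 : i2 ≠ b)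
    {q : MvP} (hq : q ∈ Algebra.adjoin k ({X i1, X i2} : Set MvP)) :
    phi a b c d q = Polynomial.C q := by
  induction hq using Algebra.adjoin_induction with
  | mem x hx =>
    rcases hx with rfl | rfl
    · exact phi_X_of_ne a b c d h1
    · exact phi_X_of_ne a b c d h2
  | algebraMap r =>
    exact phi_C a b c d r
  | add x y hx hy ihx ihy => rw [map_add, ihx, ihy, map_add]
  | mul x y hx hy ihx ihy => rw [map_mul, ihx, ihy, map_mul]

theorem eps_adjoin (a b : Fin 4) (c d : k) (i1 i2 : Fin 4) (h1 : i1 ≠ b) (h2 : i2 ≠ b)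
    {q : MvP} (hq : q ∈ Algebra.adjoin k ({X i1, X i2} : Set MvP)) :
    eps a b c d q = q := by
  rw [eps_apply, phi_adjoin a b c d i1 i2 h1 h2 hq]
  simp

theorem div_by_form (a b : Fin 4) (hab : a ≠ b) (c d : k) (hd : d ≠ 0) (q1 q2 : MvP)
    (h1 : phi a b c d q1 = Polynomial.C q1) (h2 : phi a b c d q2 = Polynomial.C q2) :
    ∀ t : MvP, (c • X a + d • X b) * t ∈ Ideal.span {q1, q2} → t ∈ Ideal.span {q1, q2} := by
  intro t ht
  obtain ⟨A, B, hAB⟩ := Ideal.mem_span_pair.mp ht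
  have h3 := congrArg (phi a b c d) hAB
  rw [map_add, map_mul, map_mul, map_mul, phi_form a b hab c d hd, h1, h2] at h3
  have h4 := congrArg Polynomial.divX h3
  rw [Polynomial.divX_add, divX_X_mul, mul_comm (phi a b c d A), mul_comm (phi a b c d B),
    Polynomial.divX_C_mul, Polynomial.divX_C_mul] at h4
  have h5 := congrArg (fun p : Polynomial MvP =>
    (Polynomial.aeval (c • X a + d • X b) : Polynomial MvP →ₐ[MvP] MvP) p) h4
  simp only [map_add, map_mul, Polynomial.aeval_C, Algebra.algebraMap_self, RingHom.id_apply,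
    eval_phi a b hab c d hd] at h5
  rw [Ideal.mem_span_pair]
  exact ⟨Polynomial.aeval (c • X a + d • X b) ((phi a b c d A).divX),
    Polynomial.aeval (c • X a + d • X b) ((phi a b c d B).divX), by linear_combination h5⟩

theorem div_by_form2 (a b : Fin 4) (hab : a ≠ b) (c d c' d' : k) (hd : d ≠ 0)
    (hlam : c' - d' * (d⁻¹ * c) ≠ 0) (q1 q2 : MvP)
    (h1 : phi a b c d q1 = Polynomial.C q1) (h2 : phi a b c d q2 = Polynomial.C q2)
    (e1 : eps a b c d q1 = q1) (e2 : eps a b c d q2 = q2)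
    (hdiv : ∀ s : MvP, X a * s ∈ Ideal.span {q1, q2} → s ∈ Ideal.span {q1, q2}) :
    ∀ t : MvP, (c' • X a + d' • X b) * t ∈ Ideal.span {c • X a + d • X b, q1, q2} →
      t ∈ Ideal.span {c • X a + d • X b, q1, q2} := by
  intro t ht
  obtain ⟨s, A, B, hAB⟩ := mem_span_triple.mp ht
  have h3 := congrArg (eps a b c d) hAB
  rw [map_mul, eps_form a b hab] at h3
  rw [map_add, map_add, map_mul, map_mul, map_mul, eps_self_form a b hab c d hd,
    mul_zero, zero_add, e1, e2] at h3
  have h4 : X a * ((c' - d' * (d⁻¹ * c)) • eps a b c d t) ∈ Ideal.span {q1, q2} := by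
    rw [Ideal.mem_span_pair]
    refine ⟨eps a b c d A, eps a b c d B, ?_⟩
    rw [mul_smul_comm]
    rw [smul_mul_assoc] at h3
    exact h3.symm
  have h5 := hdiv _ h4
  have h6 : eps a b c d t ∈ Ideal.span {q1, q2} := by
    have h7 := Ideal.mul_mem_left _ (MvPolynomial.C (c' - d' * (d⁻¹ * c))⁻¹) h5
    rwa [smul_eq_C_mul, ← mul_assoc, ← MvPolynomial.C_mul, inv_mul_cancel₀ hlam,
      MvPolynomial.C_1, one_mul] at h7
  have hW : (c • X a + d • X b) ∈ Ideal.span {c • X a + d • X b, q1, q2} :=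
    Ideal.subset_span (by simp)
  have hmono : Ideal.span {q1, q2} ≤ Ideal.span {c • X a + d • X b, q1, q2} := by
    apply Ideal.span_mono
    intro x hx
    simp only [Set.mem_insert_iff, Set.mem_singleton_iff] at hx ⊢
    tauto
  have h7 := phi_decomp a b hab c d hd t
  rw [h7]
  exact Ideal.add_mem _ (Ideal.mul_mem_right _ _ hW) (hmono h6)

theorem ker_step (a b : Fin 4) (hab : a ≠ b) (c d : k) (hd : d ≠ 0) (q2 u1 : MvP)
    (μ : k) (e : ℕ) (hq2 : eps a b c d q2 = MvPolynomial.C μ * X a ^ e) (hμ : μ ≠ 0)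
    (hu1 : eps a b c d u1 = u1) (hu1ne : u1 ≠ 0)
    (hrel : IsRelPrime u1 (X a)) :
    ∀ t : MvP, (c • X a + d • X b) * t ∈ Ideal.span {q2, u1} → t ∈ Ideal.span {q2, u1} := by
  intro t ht
  obtain ⟨A, B, hAB⟩ := Ideal.mem_span_pair.mp ht
  have h3 := congrArg (eps a b c d) hAB
  rw [map_add, map_mul, map_mul, map_mul, hq2, hu1,
    eps_self_form a b hab c d hd, zero_mul] at h3
  have hdvd : u1 ∣ (MvPolynomial.C μ * eps a b c d A) * X a ^ e :=
    ⟨-(eps a b c d B), by linear_combination h3⟩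
  have hdvd2 : u1 ∣ MvPolynomial.C μ * eps a b c d A :=
    (hrel.pow_right (n := e)).dvd_of_dvd_mul_right hdvd
  obtain ⟨w0, hw0⟩ := hdvd2
  set W : MvP := c • X a + d • X b with hWdef
  obtain ⟨v, hv⟩ : ∃ v, A = W * v + eps a b c d A :=
    ⟨_, phi_decomp a b hab c d hd A⟩
  have h6 : MvPolynomial.C μ⁻¹ * (MvPolynomial.C μ * eps a b c d A) = eps a b c d A := by
    rw [← mul_assoc, ← MvPolynomial.C_mul, inv_mul_cancel₀ hμ, MvPolynomial.C_1, one_mul]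
  have h8 : eps a b c d A = u1 * (MvPolynomial.C μ⁻¹ * w0) := by
    rw [← h6, hw0]; ring
  set w : MvP := MvPolynomial.C μ⁻¹ * w0 with hwdef
  have hAdec : A = u1 * w + W * v := by
    rw [hv, h8]; ring
  have hkey : W * (t - v * q2) = u1 * (w * q2 + B) := by
    rw [hAdec] at hAB
    linear_combination -hAB
  have hWprime : Prime W := prime_form a b hab (c := c) hd
  have hWu1 : ¬ W ∣ u1 := not_dvd_of_eps a b hab c d hd hu1 hu1ne
  have hZ : W ∣ (w * q2 + B) := by
    rcases hWprime.dvd_or_dvd (show W ∣ u1 * (w * q2 + B) from ⟨t - v * q2, hkey.symm⟩)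
      with h | h
    · exact absurd h hWu1
    · exact h
  obtain ⟨r, hr⟩ := hZ
  have hcancel : t - v * q2 = u1 * r := by
    have hWne : W ≠ 0 := form_ne_zero a b hab (c := c) hd
    apply mul_left_cancel₀ hWne
    rw [hkey, hr]; ring
  rw [Ideal.mem_span_pair]
  exact ⟨v, r, by linear_combination -hcancel⟩

theorem form_cases {a b : Fin 4} {x : MvP}
    (hx : x ∈ Submodule.span k ({X a, X b} : Set MvP)) (hxne : x ≠ 0) :
    ∃ c d : k, (d ≠ 0 ∧ x = c • X a + d • X b) ∨ (d ≠ 0 ∧ x = c • X b + d • X a) := by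
  obtain ⟨c, d, hcd⟩ := Submodule.mem_span_pair.mp hx
  by_cases hd : d = 0
  · subst hd
    refine ⟨0, c, Or.inr ⟨?_, ?_⟩⟩
    · intro h0
      apply hxne
      rw [← hcd, h0]
      simp
    · rw [← hcd]
      simp [add_comm]
  · exact ⟨c, d, Or.inl ⟨hd, hcd.symm⟩⟩

theorem prime_of_form {a b : Fin 4} (hab : a ≠ b) {x : MvP}
    (hx : x ∈ Submodule.span k ({X a, X b} : Set MvP)) (hxne : x ≠ 0) : Prime x := by
  obtain ⟨c, d, hcase⟩ := form_cases hx hxne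
  rcases hcase with ⟨hd, rfl⟩ | ⟨hd, rfl⟩
  · exact prime_form a b hab hd
  · exact prime_form b a (Ne.symm hab) hd

theorem not_dvd_cross {a b a' b' : Fin 4} (hab : a ≠ b)
    (h1 : a' ≠ a) (h2 : a' ≠ b) (h3 : b' ≠ a) (h4 : b' ≠ b)
    {x y : MvP} (hx : x ∈ Submodule.span k ({X a, X b} : Set MvP)) (hxne : x ≠ 0)
    (hy : y ∈ Submodule.span k ({X a', X b'} : Set MvP)) (hyne : y ≠ 0) : ¬ x ∣ y := by
  obtain ⟨c', d', hcd'⟩ := Submodule.mem_span_pair.mp hy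
  obtain ⟨c, d, hc⟩ := form_cases hx hxne
  rcases hc with ⟨hd, rfl⟩ | ⟨hd, rfl⟩
  · refine not_dvd_of_eps a b hab c d hd ?_ hyne
    rw [← hcd']
    exact eps_form_other a b c d a' b' h2 h4 c' d'
  · refine not_dvd_of_eps b a hab.symm c d hd ?_ hyne
    rw [← hcd']
    exact eps_form_other b a c d a' b' h1 h3 c' d'

theorem det_ne {a0 b0 : Fin 4} {W W' : MvP} {c d c' d' : k} (hd : d ≠ 0)
    (hWeq : W = c • X a0 + d • X b0) (hW'eq : c' • X a0 + d' • X b0 = W')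
    (hind : LinearIndependent k ![W, W']) : c' - d' * (d⁻¹ * c) ≠ 0 := by
  intro h0
  have hcc : c' * d - d' * c = 0 := by
    have hdd : d⁻¹ * d = 1 := inv_mul_cancel₀ hd
    calc c' * d - d' * c
        = (c' - d' * (d⁻¹ * c)) * d + d' * c * (d⁻¹ * d) - d' * c := by ring
      _ = 0 := by rw [h0, hdd]; ring
  have hdep : d' • W + (-d) • W' = 0 := by
    rw [hWeq, ← hW'eq]
    have e : d' • ((c:k) • (X a0 : MvP) + d • X b0) + (-d) • (c' • X a0 + d' • X b0)
        = (d' * c + (-d) * c') • X a0 + (d' * d + (-d) * d') • X b0 := by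
      simp only [smul_add, smul_smul, add_smul]
      abel
    rw [e, show d' * c + (-d) * c' = 0 by linear_combination -hcc,
      show d' * d + (-d) * d' = 0 by ring, zero_smul, zero_smul, add_zero]
  obtain ⟨-, hd0⟩ := LinearIndependent.pair_iff.mp hind d' (-d) hdep
  exact hd (neg_eq_zero.mp hd0)

theorem pair_ne_zero {W W' : MvP} (hind : LinearIndependent k ![W, W']) : W ≠ 0 := by
  have h0 := hind.ne_zero 0
  simpa using h0

theorem ne_zero_of_pairwise {n : ℕ} (hn : 2 ≤ n) (G : ℕ → MvP)
    (hind : ∀ i, i < n → ∀ j, j < n → i ≠ j → LinearIndependent k ![G i, G j]) :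
    ∀ i, i < n → G i ≠ 0 := by
  intro i hi
  by_cases hi0 : i = 0
  · subst hi0
    exact pair_ne_zero (hind 0 hi 1 (by omega) (by omega))
  · exact pair_ne_zero (hind i hi 0 (by omega) hi0)

theorem div_wrap (a b i1 i2 : Fin 4) (hab : a ≠ b)
    (hi1a : i1 ≠ a) (hi1b : i1 ≠ b) (hi2a : i2 ≠ a) (hi2b : i2 ≠ b)
    {W q1 q2 : MvP} (hW : W ∈ Submodule.span k ({X a, X b} : Set MvP)) (hWne : W ≠ 0)
    (hq1 : q1 ∈ Algebra.adjoin k ({X i1, X i2} : Set MvP))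
    (hq2 : q2 ∈ Algebra.adjoin k ({X i1, X i2} : Set MvP)) :
    ∀ t : MvP, W * t ∈ Ideal.span {q1, q2} → t ∈ Ideal.span {q1, q2} := by
  obtain ⟨c, d, hcase⟩ := form_cases hW hWne
  rcases hcase with ⟨hd, rfl⟩ | ⟨hd, rfl⟩
  · exact div_by_form a b hab c d hd q1 q2
      (phi_adjoin a b c d i1 i2 hi1b hi2b hq1) (phi_adjoin a b c d i1 i2 hi1b hi2b hq2)
  · exact div_by_form b a hab.symm c d hd q1 q2
      (phi_adjoin b a c d i1 i2 hi1a hi2a hq1) (phi_adjoin b a c d i1 i2 hi1a hi2a hq2)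

theorem div2_wrap (a b i1 i2 : Fin 4) (hab : a ≠ b)
    (hi1a : i1 ≠ a) (hi1b : i1 ≠ b) (hi2a : i2 ≠ a) (hi2b : i2 ≠ b)
    {W W' q1 q2 : MvP} (hW : W ∈ Submodule.span k ({X a, X b} : Set MvP))
    (hW' : W' ∈ Submodule.span k ({X a, X b} : Set MvP))
    (hind : LinearIndependent k ![W, W'])
    (hq1 : q1 ∈ Algebra.adjoin k ({X i1, X i2} : Set MvP))
    (hq2 : q2 ∈ Algebra.adjoin k ({X i1, X i2} : Set MvP)) :
    ∀ t : MvP, W' * t ∈ Ideal.span {W, q1, q2} → t ∈ Ideal.span {W, q1, q2} := by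
  have hWne : W ≠ 0 := pair_ne_zero hind
  obtain ⟨c, d, hcase⟩ := form_cases hW hWne
  obtain ⟨c', d', hW'eq⟩ := Submodule.mem_span_pair.mp hW'
  rcases hcase with ⟨hd, hWeq⟩ | ⟨hd, hWeq⟩
  · have hlam : c' - d' * (d⁻¹ * c) ≠ 0 := det_ne hd hWeq hW'eq hind
    have hXa : ((0:k) • X b + (1:k) • X a : MvP) = X a := by simp
    have hdiv := div_by_form b a hab.symm 0 1 one_ne_zero q1 q2
      (phi_adjoin b a 0 1 i1 i2 hi1a hi2a hq1) (phi_adjoin b a 0 1 i1 i2 hi1a hi2a hq2)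
    rw [hXa] at hdiv
    have main := div_by_form2 a b hab c d c' d' hd hlam q1 q2
      (phi_adjoin a b c d i1 i2 hi1b hi2b hq1) (phi_adjoin a b c d i1 i2 hi1b hi2b hq2)
      (eps_adjoin a b c d i1 i2 hi1b hi2b hq1) (eps_adjoin a b c d i1 i2 hi1b hi2b hq2) hdiv
    rw [hW'eq, ← hWeq] at main
    exact main
  · -- W = c • X b + d • X a
    have hW'eq2 : d' • X b + c' • X a = W' := by rw [← hW'eq]; exact add_comm _ _
    have hlam : d' - c' * (d⁻¹ * c) ≠ 0 := det_ne hd hWeq hW'eq2 hind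
    have hXb : ((0:k) • X a + (1:k) • X b : MvP) = X b := by simp
    have hdiv := div_by_form a b hab 0 1 one_ne_zero q1 q2
      (phi_adjoin a b 0 1 i1 i2 hi1b hi2b hq1) (phi_adjoin a b 0 1 i1 i2 hi1b hi2b hq2)
    rw [hXb] at hdiv
    have main := div_by_form2 b a hab.symm c d d' c' hd hlam q1 q2
      (phi_adjoin b a c d i1 i2 hi1a hi2a hq1) (phi_adjoin b a c d i1 i2 hi1a hi2a hq2)
      (eps_adjoin b a c d i1 i2 hi1a hi2a hq1) (eps_adjoin b a c d i1 i2 hi1a hi2a hq2) hdiv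
    rw [hW'eq2, ← hWeq] at main
    exact main

theorem eps_prod (a0 b0 : Fin 4) (c d : k) (G : ℕ → MvP) (S : Finset ℕ)
    (hfac : ∀ j ∈ S, ∃ lam : k, lam ≠ 0 ∧ eps a0 b0 c d (G j) = MvPolynomial.C lam * X a0) :
    ∃ μ : k, μ ≠ 0 ∧
      eps a0 b0 c d (∏ j ∈ S, G j) = MvPolynomial.C μ * X a0 ^ S.card := by
  classical
  induction S using Finset.induction_on with
  | empty => exact ⟨1, one_ne_zero, by simp⟩
  | @insert j S' hj ih =>
    obtain ⟨μ, hμ, hμeq⟩ := ih (fun i hi => hfac i (Finset.mem_insert_of_mem hi))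
    obtain ⟨lam, hlam, hlameq⟩ := hfac j (Finset.mem_insert_self j S')
    refine ⟨lam * μ, mul_ne_zero hlam hμ, ?_⟩
    rw [Finset.prod_insert hj, map_mul, hμeq, hlameq, Finset.card_insert_of_notMem hj,
      MvPolynomial.C_mul, pow_succ]
    ring

theorem peel_T (V : ℕ → MvP) (n : ℕ)
    (hV : ∀ j, j < n → V j ∈ Submodule.span k ({X 2, X 3} : Set MvP))
    {q1 q2 : MvP}
    (hq1 : q1 ∈ Algebra.adjoin k ({X 0, X 1} : Set MvP))
    (hq2 : q2 ∈ Algebra.adjoin k ({X 0, X 1} : Set MvP))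
    {W : MvP} (hW : W ∈ Submodule.span k ({X 2, X 3} : Set MvP))
    (T : Finset ℕ) (hT : ∀ j ∈ T, j < n)
    (hind : ∀ j ∈ T, LinearIndependent k ![W, V j]) :
    ∀ t : MvP, (∏ j ∈ T, V j) * t ∈ Ideal.span {W, q1, q2} →
      t ∈ Ideal.span {W, q1, q2} := by
  classical
  induction T using Finset.induction_on with
  | empty => intro t ht; rwa [Finset.prod_empty, one_mul] at ht
  | @insert j T' hj ih =>
    intro t ht
    rw [Finset.prod_insert hj, mul_assoc] at ht
    have step := div2_wrap 2 3 0 1 (by decide) (by decide) (by decide) (by decide) (by decide)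
      hW (hV j (hT j (Finset.mem_insert_self j T'))) (hind j (Finset.mem_insert_self j T'))
      hq1 hq2 _ ht
    exact ih (fun i hi => hT i (Finset.mem_insert_of_mem hi))
      (fun i hi => hind i (Finset.mem_insert_of_mem hi)) t step

theorem cancel_z (V : ℕ → MvP) (n : ℕ)
    (hV : ∀ j, j < n → V j ∈ Submodule.span k ({X 2, X 3} : Set MvP))
    (hVne : ∀ j, j < n → V j ≠ 0)
    (hVind : ∀ i, i < n → ∀ j, j < n → i ≠ j → LinearIndependent k ![V i, V j])
    {q1 q2 : MvP}
    (hq1 : q1 ∈ Algebra.adjoin k ({X 0, X 1} : Set MvP))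
    (hq2 : q2 ∈ Algebra.adjoin k ({X 0, X 1} : Set MvP))
    (T : Finset ℕ) (hT : ∀ j ∈ T, j < n) :
    ∀ S : Finset ℕ, (∀ j ∈ S, j < n) → Disjoint S T →
    ∀ t : MvP, (∏ j ∈ T, V j) * t ∈ Ideal.span {∏ j ∈ S, V j, q1, q2} →
      t ∈ Ideal.span {∏ j ∈ S, V j, q1, q2} := by
  classical
  intro S
  induction S using Finset.induction_on with
  | empty =>
    intro _ _ t _
    have htop : Ideal.span {∏ j ∈ (∅ : Finset ℕ), V j, q1, q2} = ⊤ := by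
      rw [Ideal.eq_top_iff_one]
      exact Ideal.subset_span (by simp)
    rw [htop]
    trivial
  | @insert i S' hiS ih =>
    intro hS hdis t ht
    have hilt : i < n := hS i (Finset.mem_insert_self i S')
    have hViS : V i ∈ Submodule.span k ({X 2, X 3} : Set MvP) := hV i hilt
    have hmono : Ideal.span {∏ j ∈ insert i S', V j, q1, q2} ≤ Ideal.span {V i, q1, q2} := by
      apply Ideal.span_le.mpr
      intro x hx
      simp only [Set.mem_insert_iff, Set.mem_singleton_iff] at hx
      rcases hx with rfl | rfl | rfl
      · rw [Finset.prod_insert hiS, mul_comm]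
        exact Ideal.mul_mem_left _ _ (Ideal.subset_span (by simp))
      · exact Ideal.subset_span (by simp)
      · exact Ideal.subset_span (by simp)
    have ht1 : (∏ j ∈ T, V j) * t ∈ Ideal.span {V i, q1, q2} := hmono ht
    have hindT : ∀ j ∈ T, LinearIndependent k ![V i, V j] := by
      intro j hj
      refine hVind i hilt j (hT j hj) ?_
      intro hij
      exact (Finset.disjoint_left.mp hdis (Finset.mem_insert_self i S')) (hij ▸ hj)
    have ht2 := peel_T V n hV hq1 hq2 hViS T hT hindT t ht1
    obtain ⟨p, A, B, hpt⟩ := mem_span_triple.mp ht2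
    obtain ⟨s, A', B', hst⟩ := mem_span_triple.mp ht
    rw [Finset.prod_insert hiS] at hst
    have hker : V i * ((∏ j ∈ T, V j) * p - s * ∏ j ∈ S', V j) ∈ Ideal.span {q1, q2} := by
      rw [Ideal.mem_span_pair]
      refine ⟨A' - (∏ j ∈ T, V j) * A, B' - (∏ j ∈ T, V j) * B, ?_⟩
      linear_combination (∏ j ∈ T, V j) * hpt - hst
    have hdivided := div_wrap 2 3 0 1 (by decide) (by decide) (by decide) (by decide)
      (by decide) hViS (hVne i hilt) hq1 hq2 _ hker
    have hp1 : (∏ j ∈ T, V j) * p ∈ Ideal.span {∏ j ∈ S', V j, q1, q2} := by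
      obtain ⟨A'', B'', hAB''⟩ := Ideal.mem_span_pair.mp hdivided
      rw [mem_span_triple]
      exact ⟨s, A'', B'', by linear_combination -hAB''⟩
    have hp2 := ih (fun j hj => hS j (Finset.mem_insert_of_mem hj))
      (Finset.disjoint_insert_left.mp hdis).2 p hp1
    obtain ⟨w, C, D, hw⟩ := mem_span_triple.mp hp2
    rw [mem_span_triple]
    refine ⟨w, C * V i + A, D * V i + B, ?_⟩
    rw [Finset.prod_insert hiS]
    linear_combination hpt + V i * hw

theorem ker_wrap (Hf : ℕ → MvP) (nH : ℕ) (hnH : 2 ≤ nH)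
    (hHsp : ∀ i, i < nH → Hf i ∈ Submodule.span k ({X 0, X 1} : Set MvP))
    (hHind : ∀ i, i < nH → ∀ j, j < nH → i ≠ j → LinearIndependent k ![Hf i, Hf j])
    (u1 : MvP) (hu1ne : u1 ≠ 0)
    (hu1adj : u1 ∈ Algebra.adjoin k ({X 2, X 3} : Set MvP))
    (hrel0 : IsRelPrime u1 (X 0)) (hrel1 : IsRelPrime u1 (X 1))
    (S2 : Finset ℕ) (hS2 : ∀ j ∈ S2, j < nH)
    (i : ℕ) (hi : i < nH) (hiS2 : i ∉ S2) :
    ∀ t : MvP, Hf i * t ∈ Ideal.span {∏ j ∈ S2, Hf j, u1} →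
      t ∈ Ideal.span {∏ j ∈ S2, Hf j, u1} := by
  have hine : Hf i ≠ 0 := ne_zero_of_pairwise hnH Hf hHind i hi
  obtain ⟨c, d, hcase⟩ := form_cases (hHsp i hi) hine
  rcases hcase with ⟨hd, hWeq⟩ | ⟨hd, hWeq⟩
  · -- Hf i = c • X 0 + d • X 1
    have hfac : ∀ j ∈ S2, ∃ lam : k, lam ≠ 0 ∧
        eps 0 1 c d (Hf j) = MvPolynomial.C lam * X 0 := by
      intro j hj
      obtain ⟨cj, dj, hcdj⟩ := Submodule.mem_span_pair.mp (hHsp j (hS2 j hj))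
      refine ⟨cj - dj * (d⁻¹ * c), ?_, ?_⟩
      · exact det_ne hd hWeq hcdj (hHind i hi j (hS2 j hj) (fun h => hiS2 (h ▸ hj)))
      · rw [← hcdj, eps_form 0 1 (by decide), smul_eq_C_mul]
    obtain ⟨μ, hμ, hμeq⟩ := eps_prod 0 1 c d Hf S2 hfac
    have hu1fix : eps 0 1 c d u1 = u1 :=
      eps_adjoin 0 1 c d 2 3 (by decide) (by decide) hu1adj
    have := ker_step 0 1 (by decide) c d hd (∏ j ∈ S2, Hf j) u1 μ S2.card
      hμeq hμ hu1fix hu1ne hrel0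
    rw [← hWeq] at this
    exact this
  · -- Hf i = c • X 1 + d • X 0
    have hfac : ∀ j ∈ S2, ∃ lam : k, lam ≠ 0 ∧
        eps 1 0 c d (Hf j) = MvPolynomial.C lam * X 1 := by
      intro j hj
      obtain ⟨cj, dj, hcdj⟩ := Submodule.mem_span_pair.mp (hHsp j (hS2 j hj))
      have hcdj' : dj • X 1 + cj • X 0 = Hf j := by rw [← hcdj]; exact add_comm _ _
      refine ⟨dj - cj * (d⁻¹ * c), ?_, ?_⟩
      · exact det_ne hd hWeq hcdj' (hHind i hi j (hS2 j hj) (fun h => hiS2 (h ▸ hj)))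
      · rw [← hcdj', eps_form 1 0 (by decide), smul_eq_C_mul]
    obtain ⟨μ, hμ, hμeq⟩ := eps_prod 1 0 c d Hf S2 hfac
    have hu1fix : eps 1 0 c d u1 = u1 :=
      eps_adjoin 1 0 c d 2 3 (by decide) (by decide) hu1adj
    have := ker_step 1 0 (by decide) c d hd (∏ j ∈ S2, Hf j) u1 μ S2.card
      hμeq hμ hu1fix hu1ne hrel1
    rw [← hWeq] at this
    exact this

theorem peel_y (Hf : ℕ → MvP) (nH : ℕ) (hnH : 2 ≤ nH)
    (hHsp : ∀ i, i < nH → Hf i ∈ Submodule.span k ({X 0, X 1} : Set MvP))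
    (hHind : ∀ i, i < nH → ∀ j, j < nH → i ≠ j → LinearIndependent k ![Hf i, Hf j])
    (u1 : MvP) (hu1ne : u1 ≠ 0)
    (hu1adj : u1 ∈ Algebra.adjoin k ({X 2, X 3} : Set MvP))
    (hrel0 : IsRelPrime u1 (X 0)) (hrel1 : IsRelPrime u1 (X 1))
    (S2 : Finset ℕ) (hS2 : ∀ j ∈ S2, j < nH) :
    ∀ S1 : Finset ℕ, (∀ i ∈ S1, i < nH) → Disjoint S1 S2 →
    ∀ t : MvP, (∏ i ∈ S1, Hf i) * t ∈ Ideal.span {∏ j ∈ S2, Hf j, u1} →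
      t ∈ Ideal.span {∏ j ∈ S2, Hf j, u1} := by
  classical
  intro S1
  induction S1 using Finset.induction_on with
  | empty => intro _ _ t ht; rwa [Finset.prod_empty, one_mul] at ht
  | @insert i S1' hiS ih =>
    intro hS1 hdis t ht
    rw [Finset.prod_insert hiS, mul_assoc] at ht
    have step := ker_wrap Hf nH hnH hHsp hHind u1 hu1ne hu1adj hrel0 hrel1 S2 hS2 i
      (hS1 i (Finset.mem_insert_self i S1'))
      (Finset.disjoint_left.mp hdis (Finset.mem_insert_self i S1')) _ ht
    exact ih (fun j hj => hS1 j (Finset.mem_insert_of_mem hj))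
      (Finset.disjoint_insert_left.mp hdis).2 t step

theorem span_le_adjoin' (a b : Fin 4) {x : MvP}
    (hx : x ∈ Submodule.span k ({X a, X b} : Set MvP)) :
    x ∈ Algebra.adjoin k ({X a, X b} : Set MvP) := by
  obtain ⟨c, d, hcd⟩ := Submodule.mem_span_pair.mp hx
  rw [← hcd]
  exact Subalgebra.add_mem _
    (Subalgebra.smul_mem _ (Algebra.subset_adjoin (by simp)) c)
    (Subalgebra.smul_mem _ (Algebra.subset_adjoin (by simp)) d)

section Ctx

theorem base_case (Hf Vf : ℕ → MvP) (α1 α2 β1 β2 : ℕ)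
    (hα1 : 0 < α1) (hα2 : 0 < α2) (hβ1 : 0 < β1) (hβ2 : 0 < β2)
    (hH : ∀ i < α1 + α2, Hf i ∈ Submodule.span k ({X 0, X 1} : Set MvP))
    (hV : ∀ j < β1 + β2, Vf j ∈ Submodule.span k ({X 2, X 3} : Set MvP))
    (hHind : ∀ i < α1 + α2, ∀ j < α1 + α2, i ≠ j → LinearIndependent k ![Hf i, Hf j])
    (hVind : ∀ i < β1 + β2, ∀ j < β1 + β2, i ≠ j → LinearIndependent k ![Vf i, Vf j]) :
    Ideal.span {∏ i ∈ Finset.range α1, Hf i, ∏ j ∈ Finset.Ico β1 (β1+β2), Vf j}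
      ⊓ Ideal.span {∏ i ∈ Finset.Ico α1 (α1+α2), Hf i, ∏ j ∈ Finset.range β1, Vf j}
    ≤ Ideal.span {∏ i ∈ Finset.range α1, Hf i, ∏ j ∈ Finset.Ico β1 (β1+β2), Vf j}
      * Ideal.span {∏ i ∈ Finset.Ico α1 (α1+α2), Hf i, ∏ j ∈ Finset.range β1, Vf j} := by
  have hαsum : 2 ≤ α1 + α2 := by omega
  have hβsum : 2 ≤ β1 + β2 := by omega
  have hHne := ne_zero_of_pairwise hαsum Hf hHind
  have hVne := ne_zero_of_pairwise hβsum Vf hVind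
  have hq1adj : (∏ i ∈ Finset.range α1, Hf i) ∈ Algebra.adjoin k ({X 0, X 1} : Set MvP) :=
    Subalgebra.prod_mem _ (fun i hi =>
      span_le_adjoin' 0 1 (hH i (by have := Finset.mem_range.mp hi; omega)))
  have hq2adj : (∏ i ∈ Finset.Ico α1 (α1+α2), Hf i) ∈
      Algebra.adjoin k ({X 0, X 1} : Set MvP) :=
    Subalgebra.prod_mem _ (fun i hi =>
      span_le_adjoin' 0 1 (hH i (Finset.mem_Ico.mp hi).2))
  have hu1adj : (∏ j ∈ Finset.range β1, Vf j) ∈ Algebra.adjoin k ({X 2, X 3} : Set MvP) :=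
    Subalgebra.prod_mem _ (fun j hj =>
      span_le_adjoin' 2 3 (hV j (by have := Finset.mem_range.mp hj; omega)))
  have hu1ne : (∏ j ∈ Finset.range β1, Vf j) ≠ 0 :=
    Finset.prod_ne_zero_iff.mpr (fun j hj =>
      hVne j (by have := Finset.mem_range.mp hj; omega))
  have hVprime : ∀ j, j < β1 + β2 → Prime (Vf j) := fun j hj =>
    prime_of_form (a := 2) (b := 3) (by decide) (hV j hj) (hVne j hj)
  have hrelu1X0 : IsRelPrime (∏ j ∈ Finset.range β1, Vf j) (X 0) :=
    IsRelPrime.prod_left (fun j hj =>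
      isRelPrime_of_prime_not_dvd
        (hVprime j (by have := Finset.mem_range.mp hj; omega))
        (not_dvd_cross (a := 2) (b := 3) (a' := 0) (b' := 1)
          (by decide) (by decide) (by decide) (by decide) (by decide)
          (hV j (by have := Finset.mem_range.mp hj; omega))
          (hVne j (by have := Finset.mem_range.mp hj; omega))
          (Submodule.subset_span (by simp)) (MvPolynomial.X_ne_zero 0)))
  have hrelu1X1 : IsRelPrime (∏ j ∈ Finset.range β1, Vf j) (X 1) :=
    IsRelPrime.prod_left (fun j hj =>
      isRelPrime_of_prime_not_dvd
        (hVprime j (by have := Finset.mem_range.mp hj; omega))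
        (not_dvd_cross (a := 2) (b := 3) (a' := 0) (b' := 1)
          (by decide) (by decide) (by decide) (by decide) (by decide)
          (hV j (by have := Finset.mem_range.mp hj; omega))
          (hVne j (by have := Finset.mem_range.mp hj; omega))
          (Submodule.subset_span (by simp)) (MvPolynomial.X_ne_zero 1)))
  intro f hf
  obtain ⟨hfI, hfJ⟩ := Submodule.mem_inf.mp hf
  obtain ⟨a, bb, hab1⟩ := Ideal.mem_span_pair.mp hfI
  obtain ⟨cc, dd, hab2⟩ := Ideal.mem_span_pair.mp hfJ
  -- u2 * bb ∈ span {u1, q1, q2}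
  have h1 : (∏ j ∈ Finset.Ico β1 (β1+β2), Vf j) * bb
      ∈ Ideal.span {∏ j ∈ Finset.range β1, Vf j,
          ∏ i ∈ Finset.range α1, Hf i, ∏ i ∈ Finset.Ico α1 (α1+α2), Hf i} := by
    rw [mem_span_triple]
    exact ⟨dd, -a, cc, by linear_combination hab1 - hab2⟩
  have hdisjβ : Disjoint (Finset.range β1) (Finset.Ico β1 (β1+β2)) := by
    rw [Finset.disjoint_left]
    intro j hj hj2
    have := Finset.mem_range.mp hj
    have := (Finset.mem_Ico.mp hj2).1
    omega
  have h2 := cancel_z Vf (β1+β2) hV hVne hVind hq1adj hq2adj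
    (Finset.Ico β1 (β1+β2)) (fun j hj => (Finset.mem_Ico.mp hj).2)
    (Finset.range β1) (fun j hj => by have := Finset.mem_range.mp hj; omega)
    hdisjβ bb h1
  obtain ⟨e, g1, g2, hbb⟩ := mem_span_triple.mp h2
  -- q1 * (a + u2*g1) ∈ span {q2, u1}
  have h3 : (∏ i ∈ Finset.range α1, Hf i)
      * (a + (∏ j ∈ Finset.Ico β1 (β1+β2), Vf j) * g1)
      ∈ Ideal.span {∏ i ∈ Finset.Ico α1 (α1+α2), Hf i, ∏ j ∈ Finset.range β1, Vf j} := by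
    rw [Ideal.mem_span_pair]
    refine ⟨cc - (∏ j ∈ Finset.Ico β1 (β1+β2), Vf j) * g2,
      dd - (∏ j ∈ Finset.Ico β1 (β1+β2), Vf j) * e, ?_⟩
    linear_combination hab2 - hab1 + (∏ j ∈ Finset.Ico β1 (β1+β2), Vf j) * hbb
  have hdisjα : Disjoint (Finset.range α1) (Finset.Ico α1 (α1+α2)) := by
    rw [Finset.disjoint_left]
    intro j hj hj2
    have := Finset.mem_range.mp hj
    have := (Finset.mem_Ico.mp hj2).1
    omega
  have h4 := peel_y Hf (α1+α2) hαsum hH hHind (∏ j ∈ Finset.range β1, Vf j)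
    hu1ne hu1adj hrelu1X0 hrelu1X1
    (Finset.Ico α1 (α1+α2)) (fun j hj => (Finset.mem_Ico.mp hj).2)
    (Finset.range α1) (fun j hj => by have := Finset.mem_range.mp hj; omega)
    hdisjα _ h3
  obtain ⟨w, r, hwr⟩ := Ideal.mem_span_pair.mp h4
  have hf_eq : f = w * ((∏ i ∈ Finset.range α1, Hf i) * (∏ i ∈ Finset.Ico α1 (α1+α2), Hf i))
      + r * ((∏ i ∈ Finset.range α1, Hf i) * (∏ j ∈ Finset.range β1, Vf j))
      + e * ((∏ j ∈ Finset.Ico β1 (β1+β2), Vf j) * (∏ j ∈ Finset.range β1, Vf j))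
      + g2 * ((∏ j ∈ Finset.Ico β1 (β1+β2), Vf j) * (∏ i ∈ Finset.Ico α1 (α1+α2), Hf i)) := by
    linear_combination -hab1 + (∏ j ∈ Finset.Ico β1 (β1+β2), Vf j) * hbb
      - (∏ i ∈ Finset.range α1, Hf i) * hwr
  rw [hf_eq]
  have hm1 : (∏ i ∈ Finset.range α1, Hf i)
      ∈ Ideal.span {∏ i ∈ Finset.range α1, Hf i, ∏ j ∈ Finset.Ico β1 (β1+β2), Vf j} :=
    Ideal.subset_span (by simp)
  have hm2 : (∏ j ∈ Finset.Ico β1 (β1+β2), Vf j)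
      ∈ Ideal.span {∏ i ∈ Finset.range α1, Hf i, ∏ j ∈ Finset.Ico β1 (β1+β2), Vf j} :=
    Ideal.subset_span (by simp)
  have hm3 : (∏ i ∈ Finset.Ico α1 (α1+α2), Hf i)
      ∈ Ideal.span {∏ i ∈ Finset.Ico α1 (α1+α2), Hf i, ∏ j ∈ Finset.range β1, Vf j} :=
    Ideal.subset_span (by simp)
  have hm4 : (∏ j ∈ Finset.range β1, Vf j)
      ∈ Ideal.span {∏ i ∈ Finset.Ico α1 (α1+α2), Hf i, ∏ j ∈ Finset.range β1, Vf j} :=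
    Ideal.subset_span (by simp)
  exact Ideal.add_mem _ (Ideal.add_mem _ (Ideal.add_mem _
    (Ideal.mul_mem_left _ _ (Ideal.mul_mem_mul hm1 hm3))
    (Ideal.mul_mem_left _ _ (Ideal.mul_mem_mul hm1 hm4)))
    (Ideal.mul_mem_left _ _ (Ideal.mul_mem_mul hm2 hm4)))
    (Ideal.mul_mem_left _ _ (Ideal.mul_mem_mul hm2 hm3))

theorem pow_base (Hf Vf : ℕ → MvP) (α1 α2 β1 β2 : ℕ)
    (hα1 : 0 < α1) (hα2 : 0 < α2) (hβ1 : 0 < β1) (hβ2 : 0 < β2)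
    (hH : ∀ i < α1 + α2, Hf i ∈ Submodule.span k ({X 0, X 1} : Set MvP))
    (hV : ∀ j < β1 + β2, Vf j ∈ Submodule.span k ({X 2, X 3} : Set MvP))
    (hHind : ∀ i < α1 + α2, ∀ j < α1 + α2, i ≠ j → LinearIndependent k ![Hf i, Hf j])
    (hVind : ∀ i < β1 + β2, ∀ j < β1 + β2, i ≠ j → LinearIndependent k ![Vf i, Vf j]) :
    ∀ m : ℕ,
    Ideal.span {(∏ i ∈ Finset.range α1, Hf i), (∏ j ∈ Finset.Ico β1 (β1+β2), Vf j)} ^ m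
      ⊓ Ideal.span {(∏ i ∈ Finset.Ico α1 (α1+α2), Hf i), (∏ j ∈ Finset.range β1, Vf j)}
    ≤ Ideal.span {(∏ i ∈ Finset.range α1, Hf i), (∏ j ∈ Finset.Ico β1 (β1+β2), Vf j)} ^ m
      * Ideal.span {(∏ i ∈ Finset.Ico α1 (α1+α2), Hf i), (∏ j ∈ Finset.range β1, Vf j)} := by
  have hαsum : 2 ≤ α1 + α2 := by omega
  have hβsum : 2 ≤ β1 + β2 := by omega
  have hHne := ne_zero_of_pairwise hαsum Hf hHind
  have hVne := ne_zero_of_pairwise hβsum Vf hVind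
  have hHprime : ∀ i, i < α1 + α2 → Prime (Hf i) := fun i hi =>
    prime_of_form (a := 0) (b := 1) (by decide) (hH i hi) (hHne i hi)
  have hq1ne : (∏ i ∈ Finset.range α1, Hf i) ≠ 0 :=
    Finset.prod_ne_zero_iff.mpr (fun i hi =>
      hHne i (by have := Finset.mem_range.mp hi; omega))
  have hrel : IsRelPrime (∏ i ∈ Finset.range α1, Hf i)
      (∏ j ∈ Finset.Ico β1 (β1+β2), Vf j) :=
    IsRelPrime.prod_left (fun i hi => IsRelPrime.prod_right (fun j hj =>
      isRelPrime_of_prime_not_dvd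
        (hHprime i (by have := Finset.mem_range.mp hi; omega))
        (not_dvd_cross (a := 0) (b := 1) (a' := 2) (b' := 3)
          (by decide) (by decide) (by decide) (by decide) (by decide)
          (hH i (by have := Finset.mem_range.mp hi; omega))
          (hHne i (by have := Finset.mem_range.mp hi; omega))
          (hV j (Finset.mem_Ico.mp hj).2) (hVne j (Finset.mem_Ico.mp hj).2))))
  intro m
  induction m with
  | zero =>
    rw [pow_zero, Ideal.one_eq_top, Ideal.top_mul]
    exact inf_le_right
  | succ m ih =>
    intro f hf
    obtain ⟨hf1, hf2⟩ := Submodule.mem_inf.mp hf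
    have hfm : f ∈ Ideal.span {(∏ i ∈ Finset.range α1, Hf i),
        (∏ j ∈ Finset.Ico β1 (β1+β2), Vf j)} ^ m :=
      Ideal.pow_le_pow_right (by omega) hf1
    have hstep := ih (Submodule.mem_inf.mpr ⟨hfm, hf2⟩)
    rw [mul_comm] at hstep
    obtain ⟨g, hgJ, hgrep⟩ := mem_mul_span_pair_pow hstep
    obtain ⟨h, hhrep⟩ := mem_span_pair_pow hf1
    have hqr := quasi_reg hq1ne hrel m g h (hgrep.symm.trans hhrep)
    rw [hgrep]
    apply Ideal.sum_mem
    intro i hi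
    rw [Finset.mem_range] at hi
    have higi := Submodule.mem_inf.mpr ⟨hqr i (by omega), hgJ i⟩
    have hbase := base_case Hf Vf α1 α2 β1 β2 hα1 hα2 hβ1 hβ2 hH hV hHind hVind higi
    have hv : (∏ i ∈ Finset.range α1, Hf i) ^ i
        * (∏ j ∈ Finset.Ico β1 (β1+β2), Vf j) ^ (m - i)
        ∈ Ideal.span {(∏ i ∈ Finset.range α1, Hf i),
            (∏ j ∈ Finset.Ico β1 (β1+β2), Vf j)} ^ m :=
      pow_mul_pow_mem _ _ (by omega)
    have hmem := Ideal.mul_mem_mul hv hbase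
    have heq : Ideal.span {(∏ i ∈ Finset.range α1, Hf i),
          (∏ j ∈ Finset.Ico β1 (β1+β2), Vf j)} ^ m
        * (Ideal.span {(∏ i ∈ Finset.range α1, Hf i),
            (∏ j ∈ Finset.Ico β1 (β1+β2), Vf j)}
          * Ideal.span {(∏ i ∈ Finset.Ico α1 (α1+α2), Hf i),
              (∏ j ∈ Finset.range β1, Vf j)})
        = Ideal.span {(∏ i ∈ Finset.range α1, Hf i),
            (∏ j ∈ Finset.Ico β1 (β1+β2), Vf j)} ^ (m+1)
          * Ideal.span {(∏ i ∈ Finset.Ico α1 (α1+α2), Hf i),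
              (∏ j ∈ Finset.range β1, Vf j)} := by
      rw [← mul_assoc, ← pow_succ]
    rwa [heq] at hmem

theorem main_le (Hf Vf : ℕ → MvP) (α1 α2 β1 β2 : ℕ)
    (hα1 : 0 < α1) (hα2 : 0 < α2) (hβ1 : 0 < β1) (hβ2 : 0 < β2)
    (hH : ∀ i < α1 + α2, Hf i ∈ Submodule.span k ({X 0, X 1} : Set MvP))
    (hV : ∀ j < β1 + β2, Vf j ∈ Submodule.span k ({X 2, X 3} : Set MvP))
    (hHind : ∀ i < α1 + α2, ∀ j < α1 + α2, i ≠ j → LinearIndependent k ![Hf i, Hf j])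
    (hVind : ∀ i < β1 + β2, ∀ j < β1 + β2, i ≠ j → LinearIndependent k ![Vf i, Vf j])
    (m : ℕ) : ∀ n : ℕ,
    Ideal.span {(∏ i ∈ Finset.range α1, Hf i), (∏ j ∈ Finset.Ico β1 (β1+β2), Vf j)} ^ m
      ⊓ Ideal.span {(∏ i ∈ Finset.Ico α1 (α1+α2), Hf i), (∏ j ∈ Finset.range β1, Vf j)} ^ n
    ≤ Ideal.span {(∏ i ∈ Finset.range α1, Hf i), (∏ j ∈ Finset.Ico β1 (β1+β2), Vf j)} ^ m
      * Ideal.span {(∏ i ∈ Finset.Ico α1 (α1+α2), Hf i), (∏ j ∈ Finset.range β1, Vf j)} ^ n := by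
  have hαsum : 2 ≤ α1 + α2 := by omega
  have hβsum : 2 ≤ β1 + β2 := by omega
  have hHne := ne_zero_of_pairwise hαsum Hf hHind
  have hVne := ne_zero_of_pairwise hβsum Vf hVind
  have hHprime : ∀ i, i < α1 + α2 → Prime (Hf i) := fun i hi =>
    prime_of_form (a := 0) (b := 1) (by decide) (hH i hi) (hHne i hi)
  have hq2ne : (∏ i ∈ Finset.Ico α1 (α1+α2), Hf i) ≠ 0 :=
    Finset.prod_ne_zero_iff.mpr (fun i hi => hHne i (Finset.mem_Ico.mp hi).2)
  have hrel : IsRelPrime (∏ i ∈ Finset.Ico α1 (α1+α2), Hf i)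
      (∏ j ∈ Finset.range β1, Vf j) :=
    IsRelPrime.prod_left (fun i hi => IsRelPrime.prod_right (fun j hj =>
      isRelPrime_of_prime_not_dvd
        (hHprime i (Finset.mem_Ico.mp hi).2)
        (not_dvd_cross (a := 0) (b := 1) (a' := 2) (b' := 3)
          (by decide) (by decide) (by decide) (by decide) (by decide)
          (hH i (Finset.mem_Ico.mp hi).2) (hHne i (Finset.mem_Ico.mp hi).2)
          (hV j (by have := Finset.mem_range.mp hj; omega))
          (hVne j (by have := Finset.mem_range.mp hj; omega)))))
  intro n
  induction n with
  | zero =>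
    rw [pow_zero, Ideal.one_eq_top, Ideal.mul_top]
    exact inf_le_left
  | succ n ih =>
    intro f hf
    obtain ⟨hf1, hf2⟩ := Submodule.mem_inf.mp hf
    have hfn : f ∈ Ideal.span {(∏ i ∈ Finset.Ico α1 (α1+α2), Hf i),
        (∏ j ∈ Finset.range β1, Vf j)} ^ n :=
      Ideal.pow_le_pow_right (by omega) hf2
    have hstep := ih (Submodule.mem_inf.mpr ⟨hf1, hfn⟩)
    obtain ⟨g, hgI, hgrep⟩ := mem_mul_span_pair_pow hstep
    obtain ⟨h, hhrep⟩ := mem_span_pair_pow hf2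
    have hqr := quasi_reg hq2ne hrel n g h (hgrep.symm.trans hhrep)
    rw [hgrep]
    apply Ideal.sum_mem
    intro i hi
    rw [Finset.mem_range] at hi
    have higi := Submodule.mem_inf.mpr ⟨hgI i, hqr i (by omega)⟩
    have hbase := pow_base Hf Vf α1 α2 β1 β2 hα1 hα2 hβ1 hβ2 hH hV hHind hVind m higi
    have hv : (∏ i ∈ Finset.Ico α1 (α1+α2), Hf i) ^ i
        * (∏ j ∈ Finset.range β1, Vf j) ^ (n - i)
        ∈ Ideal.span {(∏ i ∈ Finset.Ico α1 (α1+α2), Hf i),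
            (∏ j ∈ Finset.range β1, Vf j)} ^ n :=
      pow_mul_pow_mem _ _ (by omega)
    have hmem := Ideal.mul_mem_mul hv hbase
    have heq : Ideal.span {(∏ i ∈ Finset.Ico α1 (α1+α2), Hf i),
          (∏ j ∈ Finset.range β1, Vf j)} ^ n
        * (Ideal.span {(∏ i ∈ Finset.range α1, Hf i),
            (∏ j ∈ Finset.Ico β1 (β1+β2), Vf j)} ^ m
          * Ideal.span {(∏ i ∈ Finset.Ico α1 (α1+α2), Hf i),
              (∏ j ∈ Finset.range β1, Vf j)})
        = Ideal.span {(∏ i ∈ Finset.range α1, Hf i),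
            (∏ j ∈ Finset.Ico β1 (β1+β2), Vf j)} ^ m
          * Ideal.span {(∏ i ∈ Finset.Ico α1 (α1+α2), Hf i),
              (∏ j ∈ Finset.range β1, Vf j)} ^ (n+1) := by
      rw [pow_succ]
      ring
    rwa [heq] at hmem

theorem prod_eq_span (q1 q2 u1 u2 : MvP) (m n : ℕ) :
    Ideal.span {q1, u2} ^ m * Ideal.span {q2, u1} ^ n
      = Ideal.span { f : MvP | ∃ a b c d : ℕ, a + d = m ∧ b + c = n ∧
          f = q1 ^ a * q2 ^ b * u1 ^ c * u2 ^ d } := by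
  rw [span_pair_pow, span_pair_pow, Ideal.span_mul_span']
  apply le_antisymm
  · rw [Ideal.span_le]
    rintro x ⟨y, ⟨i, rfl⟩, z, ⟨j, rfl⟩, rfl⟩
    apply Ideal.subset_span
    refine ⟨(i:ℕ), (j:ℕ), n - (j:ℕ), m - (i:ℕ), ?_, ?_, by ring⟩
    · have := i.isLt; omega
    · have := j.isLt; omega
  · rw [Ideal.span_le]
    rintro x ⟨a, b, c, d, had, hbc, rfl⟩
    have h1 : m - a = d := by omega
    have h2 : n - b = c := by omega
    refine Ideal.subset_span
      ⟨q1 ^ a * u2 ^ (m - a), ⟨⟨a, by omega⟩, rfl⟩,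
       q2 ^ b * u1 ^ (n - b), ⟨⟨b, by omega⟩, rfl⟩, ?_⟩
    rw [h1, h2]
    ring

end Ctx

end Poly

end TwoCIAux

/-- Lemma 3.3 (generator description, degrees from `D_0`): the defining ideal of a set
of fat points supported on the disjoint union of two fat complete intersections. -/
theorem two_disjoint_fat_CI_generators
    {k : Type*} [Field k]
    (α1 α2 β1 β2 : ℕ) (hα1 : 0 < α1) (hα2 : 0 < α2) (hβ1 : 0 < β1) (hβ2 : 0 < β2)
    (H V : ℕ → MvPolynomial (Fin 4) k)
    (hH : ∀ i < α1 + α2, H i ∈ Submodule.span k ({X 0, X 1} : Set (MvPolynomial (Fin 4) k)))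
    (hV : ∀ j < β1 + β2, V j ∈ Submodule.span k ({X 2, X 3} : Set (MvPolynomial (Fin 4) k)))
    (hHind : ∀ i < α1 + α2, ∀ j < α1 + α2, i ≠ j → LinearIndependent k ![H i, H j])
    (hVind : ∀ i < β1 + β2, ∀ j < β1 + β2, i ≠ j → LinearIndependent k ![V i, V j])
    (Q1 Q2 U1 U2 : MvPolynomial (Fin 4) k)
    (hQ1 : Q1 = ∏ i ∈ Finset.range α1, H i)
    (hQ2 : Q2 = ∏ i ∈ Finset.Ico α1 (α1 + α2), H i)
    (hU1 : U1 = ∏ j ∈ Finset.range β1, V j)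
    (hU2 : U2 = ∏ j ∈ Finset.Ico β1 (β1 + β2), V j)
    (m12 m21 : ℕ) :
    Ideal.span {Q1, U2} ^ m12 ⊓ Ideal.span {Q2, U1} ^ m21 =
      Ideal.span { f : MvPolynomial (Fin 4) k |
        ∃ a b c d : ℕ, a + d = m12 ∧ b + c = m21 ∧
          f = Q1 ^ a * Q2 ^ b * U1 ^ c * U2 ^ d } := by
  subst hQ1 hQ2 hU1 hU2
  rw [← TwoCIAux.prod_eq_span]
  exact le_antisymm
    (TwoCIAux.main_le H V α1 α2 β1 β2 hα1 hα2 hβ1 hβ2 hH hV hHind hVind m12 m21)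
    Ideal.mul_le_inf
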